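/- (Hardy–Littlewood inequality) For non-negative integrable functions μ, ν on ℝⁿ, ∫_{ℝⁿ} μ(x) ν(x) dx ≤ ∫_{ℝⁿ} μ^σ(x) ν^σ(x) dx, where f^σ denotes the symmetric decreasing rearrangement of f. -/

import Mathlib

open MeasureTheory Set

def SymmUnimodal {n : ℕ} (f : EuclideanSpace ℝ (Fin n) → ℝ) : Prop :=
  ∃ φ : ℝ → ℝ, AntitoneOn φ (Set.Ici 0) ∧ ∀ x, f x = φ ‖x‖

/-- `fσ` is the symmetric decreasing rearrangement of `f`: it is radially
non-increasing, lower semicontinuous, and equimeasurable with `f`. -/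
def IsSDR {n : ℕ} (f fσ : EuclideanSpace ℝ (Fin n) → ℝ) : Prop :=
  SymmUnimodal fσ ∧ LowerSemicontinuous fσ ∧
    ∀ t : ℝ, 0 < t → volume {x | t < fσ x} = volume {x | t < f x}

section Aux

variable {α : Type*} [MeasurableSpace α]

lemma double_layercake (vol : Measure α)
    (f g : α → ℝ) (hf : Measurable f) (hg : Measurable g)
    (hgnn : ∀ x, 0 ≤ g x) :
    ∫⁻ x, ENNReal.ofReal (g x) * ENNReal.ofReal (f x) ∂vol
      = ∫⁻ s in Ioi (0:ℝ), ∫⁻ t in Ioi (0:ℝ),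
          vol ({x | t < g x} ∩ {x | s < f x}) := by
  set ρ : Measure α := vol.withDensity (fun x => ENNReal.ofReal (g x)) with hρ
  have hgm : Measurable fun x => ENNReal.ofReal (g x) := hg.ennreal_ofReal
  have h1 : ∫⁻ x, ENNReal.ofReal (f x) ∂ρ
      = ∫⁻ x, ENNReal.ofReal (g x) * ENNReal.ofReal (f x) ∂vol :=
    lintegral_withDensity_eq_lintegral_mul₀ hgm.aemeasurable
      hf.ennreal_ofReal.aemeasurable
  have h2 : ∫⁻ x, ENNReal.ofReal (f x) ∂ρ
      = ∫⁻ s in Ioi (0:ℝ), ρ {x | s < f x} := by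
    have key := lintegral_eq_lintegral_meas_lt ρ
      (f := fun x => max (f x) 0) (Filter.Eventually.of_forall fun x => le_max_right _ _)
      (hf.max measurable_const).aemeasurable
    calc ∫⁻ x, ENNReal.ofReal (f x) ∂ρ
        = ∫⁻ x, ENNReal.ofReal (max (f x) 0) ∂ρ := by
          congr 1; funext x
          rcases le_total (f x) 0 with h | h
          · rw [max_eq_right h, ENNReal.ofReal_eq_zero.mpr h, ENNReal.ofReal_zero]
          · rw [max_eq_left h]
      _ = ∫⁻ s in Ioi (0:ℝ), ρ {x | s < max (f x) 0} := key
      _ = ∫⁻ s in Ioi (0:ℝ), ρ {x | s < f x} := by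
          apply setLIntegral_congr_fun measurableSet_Ioi
          intro s hs; beta_reduce
          congr 1; ext x
          simp only [mem_setOf_eq, lt_max_iff]
          exact or_iff_left (asymm hs)
  rw [← h1, h2]
  apply setLIntegral_congr_fun measurableSet_Ioi
  intro s hs; beta_reduce
  have hms : MeasurableSet {x | s < f x} := measurableSet_lt measurable_const hf
  rw [hρ, withDensity_apply _ hms]
  have := lintegral_eq_lintegral_meas_lt (vol.restrict {x | s < f x})
    (f := g) (Filter.Eventually.of_forall hgnn) hg.aemeasurable
  rw [this]
  apply setLIntegral_congr_fun measurableSet_Ioi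
  intro t ht; beta_reduce
  rw [Measure.restrict_apply (measurableSet_lt measurable_const hg)]

end Aux

lemma unimodal_nested {n : ℕ} {f g : EuclideanSpace ℝ (Fin n) → ℝ}
    (hf : SymmUnimodal f) (hg : SymmUnimodal g) (s t : ℝ) :
    {x | s < f x} ⊆ {x | t < g x} ∨ {x | t < g x} ⊆ {x | s < f x} := by
  obtain ⟨φ, hφ, hφf⟩ := hf
  obtain ⟨ψ, hψ, hψg⟩ := hg
  have Df : ∀ x y : EuclideanSpace ℝ (Fin n), ‖y‖ ≤ ‖x‖ → s < f x → s < f y := by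
    intro x y h hx
    refine lt_of_lt_of_le hx ?_
    rw [hφf x, hφf y]
    exact hφ (norm_nonneg y) (le_trans (norm_nonneg y) h) h
  have Dg : ∀ x y : EuclideanSpace ℝ (Fin n), ‖y‖ ≤ ‖x‖ → t < g x → t < g y := by
    intro x y h hx
    refine lt_of_lt_of_le hx ?_
    rw [hψg x, hψg y]
    exact hψ (norm_nonneg y) (le_trans (norm_nonneg y) h) h
  by_contra hcon
  push_neg at hcon
  obtain ⟨h1, h2⟩ := hcon
  obtain ⟨x, hx, hx'⟩ := not_subset.mp h1
  obtain ⟨y, hy, hy'⟩ := not_subset.mp h2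
  rcases le_total ‖x‖ ‖y‖ with h | h
  · exact hx' (Dg y x h hy)
  · exact hy' (Df x y h hx)

theorem stmt5 {n : ℕ} (μ ν μσ νσ : EuclideanSpace ℝ (Fin n) → ℝ)
    (hμnn : ∀ x, 0 ≤ μ x) (hνnn : ∀ x, 0 ≤ ν x)
    (hμint : Integrable μ) (hνint : Integrable ν)
    (hμσ : IsSDR μ μσ) (hνσ : IsSDR ν νσ) :
    ∫⁻ x, ENNReal.ofReal (μ x * ν x) ≤ ∫⁻ x, ENNReal.ofReal (μσ x * νσ x) := by
  classical
  -- measurable nonneg representatives of μ, ν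
  have hμae : AEMeasurable μ volume := hμint.aemeasurable
  have hνae : AEMeasurable ν volume := hνint.aemeasurable
  set μ' : EuclideanSpace ℝ (Fin n) → ℝ := fun x => max (hμae.mk μ x) 0 with hμ'def
  set ν' : EuclideanSpace ℝ (Fin n) → ℝ := fun x => max (hνae.mk ν x) 0 with hν'def
  have hμ'm : Measurable μ' := hμae.measurable_mk.max measurable_const
  have hν'm : Measurable ν' := hνae.measurable_mk.max measurable_const
  have hμ'ae : μ =ᵐ[volume] μ' := by
    filter_upwards [hμae.ae_eq_mk] with x hx
    rw [hμ'def]; simp only [← hx, max_eq_left (hμnn x)]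
  have hν'ae : ν =ᵐ[volume] ν' := by
    filter_upwards [hνae.ae_eq_mk] with x hx
    rw [hν'def]; simp only [← hx, max_eq_left (hνnn x)]
  have hμ'nn : ∀ x, 0 ≤ μ' x := fun x => le_max_right _ _
  have hν'nn : ∀ x, 0 ≤ ν' x := fun x => le_max_right _ _
  -- positive parts of μσ, νσ
  have hμσm : Measurable μσ := hμσ.2.1.measurable
  have hνσm : Measurable νσ := hνσ.2.1.measurable
  set μp : EuclideanSpace ℝ (Fin n) → ℝ := fun x => max (μσ x) 0 with hμpdef
  set νp : EuclideanSpace ℝ (Fin n) → ℝ := fun x => max (νσ x) 0 with hνpdef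
  have hμpm : Measurable μp := hμσm.max measurable_const
  have hνpm : Measurable νp := hνσm.max measurable_const
  have hμpnn : ∀ x, 0 ≤ μp x := fun x => le_max_right _ _
  have hνpnn : ∀ x, 0 ≤ νp x := fun x => le_max_right _ _
  have hμplev : ∀ s : ℝ, 0 < s → {x | s < μp x} = {x | s < μσ x} := by
    intro s hs; ext x; simp only [hμpdef, mem_setOf_eq, lt_max_iff]
    exact or_iff_left (asymm hs)
  have hνplev : ∀ t : ℝ, 0 < t → {x | t < νp x} = {x | t < νσ x} := by
    intro t ht; ext x; simp only [hνpdef, mem_setOf_eq, lt_max_iff]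
    exact or_iff_left (asymm ht)
  -- superlevel set measures of representatives
  have hμlev : ∀ s : ℝ, volume {x | s < μ' x} = volume {x | s < μ x} := by
    intro s
    apply measure_congr
    filter_upwards [hμ'ae] with x hx
    show (s < μ' x) = (s < μ x)
    rw [hx]
  have hνlev : ∀ t : ℝ, volume {x | t < ν' x} = volume {x | t < ν x} := by
    intro t
    apply measure_congr
    filter_upwards [hν'ae] with x hx
    show (t < ν' x) = (t < ν x)
    rw [hx]
  -- the key pointwise measure inequality
  have key : ∀ s ∈ Ioi (0:ℝ), ∀ t ∈ Ioi (0:ℝ),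
      volume ({x | t < ν' x} ∩ {x | s < μ' x})
        ≤ volume ({x | t < νp x} ∩ {x | s < μp x}) := by
    intro s hs t ht
    have hsμ : MeasurableSet {x | s < μ' x} := measurableSet_lt measurable_const hμ'm
    have hLHS : volume ({x | t < ν' x} ∩ {x | s < μ' x})
        ≤ min (volume {x | t < ν x}) (volume {x | s < μ x}) := by
      refine le_min ?_ ?_
      · exact le_trans (measure_mono inter_subset_left) (le_of_eq (hνlev t))
      · exact le_trans (measure_mono inter_subset_right) (le_of_eq (hμlev s))
    have hRHS : volume ({x | t < νp x} ∩ {x | s < μp x})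
        = min (volume {x | t < ν x}) (volume {x | s < μ x}) := by
      rw [hνplev t ht, hμplev s hs]
      rcases unimodal_nested hνσ.1 hμσ.1 t s with h | h
      · rw [inter_eq_left.mpr h, hνσ.2.2 t ht]
        exact (min_eq_left (le_trans (hνσ.2.2 t ht).symm.le (le_trans (measure_mono h) (hμσ.2.2 s hs).le))).symm
      · rw [inter_eq_right.mpr h, hμσ.2.2 s hs]
        exact (min_eq_right (le_trans (hμσ.2.2 s hs).symm.le (le_trans (measure_mono h) (hνσ.2.2 t ht).le))).symm
    rw [hRHS]; exact hLHS
  calc ∫⁻ x, ENNReal.ofReal (μ x * ν x)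
      = ∫⁻ x, ENNReal.ofReal (ν' x) * ENNReal.ofReal (μ' x) := by
        apply lintegral_congr_ae
        filter_upwards [hμ'ae, hν'ae] with x hx hy
        rw [mul_comm, ENNReal.ofReal_mul (hνnn x), hx, hy]
    _ = ∫⁻ s in Ioi (0:ℝ), ∫⁻ t in Ioi (0:ℝ),
          volume ({x | t < ν' x} ∩ {x | s < μ' x}) :=
        double_layercake volume μ' ν' hμ'm hν'm hν'nn
    _ ≤ ∫⁻ s in Ioi (0:ℝ), ∫⁻ t in Ioi (0:ℝ),
          volume ({x | t < νp x} ∩ {x | s < μp x}) := by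
        refine lintegral_mono_ae ?_
        filter_upwards [ae_restrict_mem measurableSet_Ioi] with s hs
        refine lintegral_mono_ae ?_
        filter_upwards [ae_restrict_mem measurableSet_Ioi] with t ht
        exact key s hs t ht
    _ = ∫⁻ x, ENNReal.ofReal (νp x) * ENNReal.ofReal (μp x) :=
        (double_layercake volume μp νp hμpm hνpm hνpnn).symm
    _ ≤ ∫⁻ x, ENNReal.ofReal (μσ x * νσ x) := by
        refine lintegral_mono fun x => ?_
        rw [← ENNReal.ofReal_mul (hνpnn x), mul_comm]
        rcases le_or_gt 0 (μσ x) with ha | ha <;> rcases le_or_gt 0 (νσ x) with hb | hb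
        · rw [hμpdef, hνpdef]; simp only [max_eq_left ha, max_eq_left hb]; exact le_rfl
        · rw [hνpdef]; simp only [max_eq_right hb.le, mul_zero, ENNReal.ofReal_zero]
          exact zero_le
        · rw [hμpdef]; simp only [max_eq_right ha.le, zero_mul, ENNReal.ofReal_zero]
          exact zero_le
        · rw [hμpdef]; simp only [max_eq_right ha.le, zero_mul, ENNReal.ofReal_zero]
          exact zero_le
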